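/- Let X be an extremally disconnected regular Hausdorff space, Y a completely regular Hausdorff space, and φ : X → Set Y an usco mapping. Then for each dense subset A ⊆ X, each continuous selection for the restriction φ↾A can be extended to a continuous selection for φ. -/

import Mathlib

open Filter Topology Set

/-- Extension of densely defined continuous selections for usco mappings into
completely regular Hausdorff spaces, on extremally disconnected regular
Hausdorff domains. -/
theorem selection_extension_of_extremallyDisconnected_completelyRegular
    {X Y : Type*} [TopologicalSpace X] [T2Space X] [RegularSpace X]
    [ExtremallyDisconnected X]
    [TopologicalSpace Y] [T2Space Y] [CompletelyRegularSpace Y]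
    (φ : X → Set Y)
    (hne : ∀ x, (φ x).Nonempty)
    (hcomp : ∀ x, IsCompact (φ x))
    (husc : ∀ U : Set Y, IsOpen U → IsOpen {x | φ x ⊆ U})
    (A : Set X) (hA : Dense A)
    (g : A → Y) (hg : Continuous g) (hgsel : ∀ a : A, g a ∈ φ a) :
    ∃ f : X → Y, Continuous f ∧ (∀ x, f x ∈ φ x) ∧ ∀ a : A, f a = g a := by
  classical
  -- the filter of values of `g` near `x`
  set L : X → Filter Y :=
    fun x => Filter.map g (Filter.comap (Subtype.val : A → X) (𝓝 x)) with hLdef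
  have hNB : ∀ x, (L x).NeBot := fun x =>
    ((IsDenseInducing.mk Topology.IsInducing.subtypeVal hA.denseRange_val).comap_nhds_neBot
      x).map _
  -- membership characterization for `L x`
  have hmem : ∀ (x : X) (s : Set Y),
      s ∈ L x ↔ ∃ N ∈ 𝓝 x, ∀ a : A, (a : X) ∈ N → g a ∈ s := by
    intro x s
    simp only [hLdef, Filter.mem_map, Filter.mem_comap]
    constructor
    · rintro ⟨N, hN, hsub⟩
      exact ⟨N, hN, fun a ha => hsub ha⟩
    · rintro ⟨N, hN, hsub⟩
      exact ⟨N, hN, fun a ha => hsub a ha⟩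
  -- open sets containing `φ x` belong to `L x`
  have hUmem : ∀ (x : X) (U : Set Y), IsOpen U → φ x ⊆ U → U ∈ L x := by
    intro x U hU hsub
    rw [hmem]
    exact ⟨{x' | φ x' ⊆ U}, (husc U hU).mem_nhds hsub,
      fun a ha => ha (hgsel a)⟩
  -- uniqueness of cluster points of `L x`, via extremal disconnectedness
  have huniq : ∀ (x : X) (y₁ y₂ : Y),
      ClusterPt y₁ (L x) → ClusterPt y₂ (L x) → y₁ = y₂ := by
    intro x y₁ y₂ h₁ h₂
    by_contra hne'
    obtain ⟨V₁, V₂, hV₁o, hV₂o, hy₁, hy₂, hVd⟩ := t2_separation hne'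
    obtain ⟨U₁, hU₁o, hU₁⟩ := isOpen_induced_iff.mp (hV₁o.preimage hg)
    obtain ⟨U₂, hU₂o, hU₂⟩ := isOpen_induced_iff.mp (hV₂o.preimage hg)
    -- U₁ and U₂ are disjoint since A is dense
    have hdisj : Disjoint U₁ U₂ := by
      rw [Set.disjoint_iff_inter_eq_empty]
      by_contra h
      obtain ⟨z, hz⟩ := hA.inter_open_nonempty _ (hU₁o.inter hU₂o)
        (Set.nonempty_iff_ne_empty.mpr h)
      have hz1 : (⟨z, hz.2⟩ : A) ∈ (Subtype.val ⁻¹' U₁ : Set A) := hz.1.1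
      have hz2 : (⟨z, hz.2⟩ : A) ∈ (Subtype.val ⁻¹' U₂ : Set A) := hz.1.2
      rw [hU₁] at hz1; rw [hU₂] at hz2
      exact hVd.le_bot ⟨hz1, hz2⟩
    -- their closures are disjoint (extremal disconnectedness)
    have hclopen : IsOpen (closure U₁) := ExtremallyDisconnected.open_closure U₁ hU₁o
    have hcl : Disjoint (closure U₁) (closure U₂) :=
      ((hdisj.closure_left hU₂o).symm.closure_left hclopen).symm
    -- but x lies in both closures
    have hxcl : ∀ (U : Set X) (V : Set Y) (y : Y), (Subtype.val ⁻¹' U : Set A) = g ⁻¹' V →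
        V ∈ 𝓝 y → ClusterPt y (L x) → x ∈ closure U := by
      intro U V y hUV hV hy
      rw [mem_closure_iff]
      intro o ho hxo
      have hS : g '' (Subtype.val ⁻¹' o) ∈ L x :=
        (hmem x _).mpr ⟨o, ho.mem_nhds hxo, fun a ha => Set.mem_image_of_mem g ha⟩
      obtain ⟨w, hw1, hw2⟩ := clusterPt_iff_nonempty.mp hy hV hS
      obtain ⟨a, hao, rfl⟩ := hw2
      have : a ∈ (Subtype.val ⁻¹' U : Set A) := by rw [hUV]; exact hw1
      exact ⟨a, hao, this⟩
    exact hcl.le_bot ⟨hxcl U₁ V₁ y₁ hU₁ (hV₁o.mem_nhds hy₁) h₁,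
      hxcl U₂ V₂ y₂ hU₂ (hV₂o.mem_nhds hy₂) h₂⟩
  -- every ultrafilter finer than `L x` converges to a point of `φ x`
  have hUlt : ∀ (x : X) (𝒰 : Ultrafilter Y), ↑𝒰 ≤ L x → ∃ y ∈ φ x, ↑𝒰 ≤ 𝓝 y := by
    intro x 𝒰 hle
    by_contra hcon
    push_neg at hcon
    have hV : ∀ y : φ x, ∃ V : Set Y, IsOpen V ∧ (y : Y) ∈ V ∧ V ∉ 𝒰 := by
      intro y
      by_contra h
      push_neg at h
      refine hcon y y.2 (le_nhds_iff.mpr fun s hs hso => ?_)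
      exact h s hso hs
    choose V hVo hVmem hVnot using hV
    obtain ⟨t, ht⟩ := (hcomp x).elim_finite_subcover V hVo
      (fun y hy => Set.mem_iUnion.mpr ⟨⟨y, hy⟩, hVmem ⟨y, hy⟩⟩)
    have h1 : (⋃ i ∈ t, V i) ∈ 𝒰 :=
      hle (hUmem x _ (isOpen_biUnion fun i _ => hVo i) ht)
    have h2 : (⋃ i ∈ t, V i) ∉ 𝒰 := by
      rw [← Ultrafilter.compl_mem_iff_notMem, Set.compl_iUnion₂]
      exact (Filter.biInter_finset_mem t).mpr
        fun i _ => (Ultrafilter.compl_mem_iff_notMem).mpr (hVnot i)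
    exact h2 h1
  -- hence `L x` converges to a point of `φ x`
  have hconv : ∀ x : X, ∃ y ∈ φ x, L x ≤ 𝓝 y := by
    intro x
    haveI := hNB x
    obtain ⟨𝒰, h𝒰⟩ := (L x).exists_ultrafilter_le
    obtain ⟨y, hyφ, hylim⟩ := hUlt x 𝒰 h𝒰
    have hycl : ClusterPt y (L x) := by
      have : (↑𝒰 : Filter Y) ≤ 𝓝 y ⊓ L x := le_inf hylim h𝒰
      exact Filter.neBot_of_le this
    refine ⟨y, hyφ, Filter.le_iff_ultrafilter.mpr fun 𝒰' h𝒰' => ?_⟩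
    obtain ⟨y', hy'φ, hy'lim⟩ := hUlt x 𝒰' h𝒰'
    have hy'cl : ClusterPt y' (L x) := by
      have : (↑𝒰' : Filter Y) ≤ 𝓝 y' ⊓ L x := le_inf hy'lim h𝒰'
      exact Filter.neBot_of_le this
    rwa [huniq x y' y hy'cl hycl] at hy'lim
  choose f hfφ hflim using hconv
  refine ⟨f, ?_, hfφ, ?_⟩
  · -- continuity
    rw [continuous_iff_continuousAt]
    intro x₀
    rw [ContinuousAt, (closed_nhds_basis (f x₀)).tendsto_right_iff]
    rintro C ⟨hC, hCcl⟩
    obtain ⟨N, hN, hNsub⟩ := (hmem x₀ C).mp (hflim x₀ hC)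
    filter_upwards [interior_mem_nhds.mpr hN] with x hx
    have hS : g '' (Subtype.val ⁻¹' interior N) ∈ L x :=
      (hmem x _).mpr ⟨interior N, isOpen_interior.mem_nhds hx,
        fun a ha => Set.mem_image_of_mem g ha⟩
    haveI := hNB x
    have hcp : ClusterPt (f x) (L x) := by
      have : L x ≤ 𝓝 (f x) ⊓ L x := le_inf (hflim x) le_rfl
      exact Filter.neBot_of_le this
    have hmemcl : f x ∈ closure (g '' (Subtype.val ⁻¹' interior N)) :=
      mem_closure_iff_clusterPt.mpr (hcp.mono (Filter.le_principal_iff.mpr hS))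
    have hsubC : g '' (Subtype.val ⁻¹' interior N) ⊆ C := by
      rintro _ ⟨a, ha, rfl⟩
      exact hNsub a (interior_subset ha)
    have : f x ∈ closure C := closure_mono hsubC hmemcl
    rwa [hCcl.closure_eq] at this
  · -- agreement with g on A
    intro a
    have hcomap : Filter.comap (Subtype.val : A → X) (𝓝 (a : X)) = 𝓝 a :=
      (nhds_induced _ _).symm
    have h1 : Filter.Tendsto g (𝓝 a) (𝓝 (f (a : X))) := by
      have := hflim (a : X)
      rw [hLdef] at this
      simpa [hcomap] using (show Filter.Tendsto g _ _ from this)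
    exact tendsto_nhds_unique h1 (hg.continuousAt)
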